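/- Determinant identity for the posterior-linearization innovation covariance in the linear case: det Ŝ = (det R)² / det S, where Ŝ = H P̂ Hᵀ + R − H K R − (H K R)ᵀ. -/

import Mathlib

open Matrix

/-- Determinant identity for the posterior-linearization innovation covariance in the
linear case: `det Ŝ = (det R)² / det S`. -/
theorem Shat_det
    (n m : ℕ) (hn : 0 < n) (hm : 0 < m)
    (H : Matrix (Fin m) (Fin n) ℝ)
    (R : Matrix (Fin m) (Fin m) ℝ) (hR : R.PosDef)
    (Pbar : Matrix (Fin n) (Fin n) ℝ) (hPbar : Pbar.PosDef)
    (S : Matrix (Fin m) (Fin m) ℝ) (hS : S = H * Pbar * Hᵀ + R)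
    (K : Matrix (Fin n) (Fin m) ℝ) (hK : K = Pbar * Hᵀ * S⁻¹)
    (Phat : Matrix (Fin n) (Fin n) ℝ) (hPhat : Phat = Pbar - K * H * Pbar)
    (Shat : Matrix (Fin m) (Fin m) ℝ)
    (hShat : Shat = H * Phat * Hᵀ + R - H * K * R - (H * K * R)ᵀ) :
    Shat.det = R.det ^ 2 / S.det := by
  -- S is positive definite
  have hHPH : (H * Pbar * Hᵀ).PosSemidef := by
    have := hPbar.posSemidef.mul_mul_conjTranspose_same H
    simpa using this
  have hSpd : S.PosDef := by
    rw [hS]; exact Matrix.PosDef.posSemidef_add hHPH hR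
  have hSdet : IsUnit S.det := isUnit_iff_ne_zero.mpr hSpd.det_pos.ne'
  have hSS : S * S⁻¹ = 1 := Matrix.mul_nonsing_inv S hSdet
  have hSS' : S⁻¹ * S = 1 := Matrix.nonsing_inv_mul S hSdet
  have hSsymm : Sᵀ = S := by
    have := hSpd.isHermitian
    rwa [Matrix.IsHermitian, Matrix.conjTranspose_eq_transpose_of_trivial] at this
  have hRsymm : Rᵀ = R := by
    have := hR.isHermitian
    rwa [Matrix.IsHermitian, Matrix.conjTranspose_eq_transpose_of_trivial] at this
  have hSinvT : (S⁻¹)ᵀ = S⁻¹ := by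
    rw [Matrix.transpose_nonsing_inv, hSsymm]
  have hA : H * Pbar * Hᵀ = S - R := by rw [hS]; abel
  -- H * K = 1 - R * S⁻¹
  have hHK : H * K = 1 - R * S⁻¹ := by
    rw [hK]
    calc H * (Pbar * Hᵀ * S⁻¹) = (H * Pbar * Hᵀ) * S⁻¹ := by simp [Matrix.mul_assoc]
    _ = (S - R) * S⁻¹ := by rw [hA]
    _ = 1 - R * S⁻¹ := by rw [Matrix.sub_mul, hSS]
  have hHKR : H * K * R = R - R * S⁻¹ * R := by
    rw [hHK]; noncomm_ring
  have hHKRT : (H * K * R)ᵀ = R - R * S⁻¹ * R := by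
    rw [hHKR]
    simp [Matrix.transpose_sub, Matrix.transpose_mul, hRsymm, hSinvT, Matrix.mul_assoc]
  have hHPhatH : H * Phat * Hᵀ = R - R * S⁻¹ * R := by
    rw [hPhat]
    have : H * (Pbar - K * H * Pbar) * Hᵀ
        = H * Pbar * Hᵀ - (H * K) * (H * Pbar * Hᵀ) := by
      simp only [Matrix.sub_mul, Matrix.mul_sub, Matrix.mul_assoc]
    rw [this, hA, hHK]
    rw [Matrix.sub_mul, Matrix.one_mul, Matrix.mul_sub, Matrix.mul_assoc, hSS']
    noncomm_ring
  have hShat2 : Shat = R * S⁻¹ * R := by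
    rw [hShat, hHPhatH, hHKRT, hHKR]; noncomm_ring
  rw [hShat2]
  rw [Matrix.det_mul, Matrix.det_mul, Matrix.det_nonsing_inv, Ring.inverse_eq_inv']
  have : S.det ≠ 0 := hSdet.ne_zero
  field_simp
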